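/- (Hoffman–Johnson decomposition, Eq. 4 of the paper) Let p(x) be a data distribution and q(z|x) a Markov kernel (the variational posterior). Define the variational joint q(x,z) = p(x) ⊗ q(z|x), the aggregated posterior q(z) = E_{p(x)}[q(z|x)] (the z-marginal of the variational joint), and the variational mutual information I_q(x,z) = KL(q(x,z) ‖ p(x) × q(z)). Then for any prior distribution p(z), E_{x∼p(x)}[KL(q(z|x) ‖ p(z))] = I_q(x,z) + KL(q(z) ‖ p(z)). -/

import Mathlib

open MeasureTheory ProbabilityTheory Real
open scoped ENNReal Classical

/-- The Kullback–Leibler divergence between two measures, defined as the integral of the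
log-likelihood ratio when `μ ≪ ν` and this ratio is integrable, and `∞` otherwise. -/

noncomputable def klDiv {α : Type*} [MeasurableSpace α] (μ ν : Measure α) : ℝ≥0∞ :=
  if μ ≪ ν ∧ Integrable (llr μ ν) μ then ENNReal.ofReal (∫ x, llr μ ν x ∂μ) else ⊤

section HJAux

variable {α : Type*} [MeasurableSpace α] {μ ν : Measure α}

lemma aux_lintegral_ofReal_neg_llr_le
    [IsProbabilityMeasure μ] [IsProbabilityMeasure ν] (h : μ ≪ ν) :
    ∫⁻ x, ENNReal.ofReal (-llr μ ν x) ∂μ ≤ 1 := by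
  have h1 : ∀ᵐ x ∂μ, ENNReal.ofReal (-llr μ ν x) ≤ ν.rnDeriv μ x := by
    filter_upwards [Measure.rnDeriv_pos h, h.ae_le (Measure.rnDeriv_lt_top μ ν),
      Measure.inv_rnDeriv h] with x hpos hlt hinv
    have ht : 0 < (μ.rnDeriv ν x).toReal := ENNReal.toReal_pos hpos.ne' hlt.ne
    have h2 : -llr μ ν x ≤ (μ.rnDeriv ν x).toReal⁻¹ := by
      rw [llr, ← Real.log_inv]
      have := Real.log_le_sub_one_of_pos (x := (μ.rnDeriv ν x).toReal⁻¹) (by positivity)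
      linarith
    calc ENNReal.ofReal (-llr μ ν x) ≤ ENNReal.ofReal ((μ.rnDeriv ν x).toReal⁻¹) :=
          ENNReal.ofReal_le_ofReal h2
      _ = ENNReal.ofReal (((μ.rnDeriv ν x)⁻¹).toReal) := by rw [ENNReal.toReal_inv]
      _ ≤ (μ.rnDeriv ν x)⁻¹ := ENNReal.ofReal_toReal_le
      _ = ν.rnDeriv μ x := hinv
  calc ∫⁻ x, ENNReal.ofReal (-llr μ ν x) ∂μ ≤ ∫⁻ x, ν.rnDeriv μ x ∂μ := lintegral_mono_ae h1
    _ ≤ ν Set.univ := Measure.lintegral_rnDeriv_le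
    _ = 1 := measure_univ

lemma aux_integral_llr_nonneg
    [IsProbabilityMeasure μ] [IsProbabilityMeasure ν] (h : μ ≪ ν)
    (hint : Integrable (llr μ ν) μ) :
    0 ≤ ∫ x, llr μ ν x ∂μ := by
  have hexp_int : Integrable (fun x ↦ exp (-llr μ ν x)) μ :=
    (Measure.integrable_toReal_rnDeriv).congr (exp_neg_llr h).symm
  have hle : ∫ x, -llr μ ν x ∂μ ≤ ∫ x, (exp (-llr μ ν x) - 1) ∂μ := by
    refine integral_mono hint.neg (hexp_int.sub (integrable_const 1)) fun x ↦ ?_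
    have := Real.add_one_le_exp (-llr μ ν x)
    simp only
    linarith
  have h2 : ∫ x, (exp (-llr μ ν x) - 1) ∂μ = (∫ x, exp (-llr μ ν x) ∂μ) - 1 := by
    rw [integral_sub hexp_int (integrable_const 1), integral_const]
    simp
  have h3 : ∫ x, exp (-llr μ ν x) ∂μ ≤ 1 := by
    rw [integral_congr_ae (exp_neg_llr h)]
    calc ∫ x, (ν.rnDeriv μ x).toReal ∂μ
        = ∫ x in Set.univ, (ν.rnDeriv μ x).toReal ∂μ := by rw [setIntegral_univ]
      _ ≤ (ν Set.univ).toReal := Measure.setIntegral_toReal_rnDeriv_le (by simp)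
      _ = 1 := by simp
  rw [integral_neg] at hle
  linarith

lemma aux_lintegral_ofReal_le {f : α → ℝ} (hf : Integrable f μ) :
    ∫⁻ x, ENNReal.ofReal (f x) ∂μ
      ≤ ENNReal.ofReal (∫ x, f x ∂μ) + ∫⁻ x, ENNReal.ofReal (-f x) ∂μ := by
  have hmax : ∀ a : ℝ, max a 0 = a + max (-a) 0 := by
    intro a; rcases le_total 0 a with h | h <;> simp [max_eq_left, max_eq_right, *]
  have hofReal : ∀ a : ℝ, ENNReal.ofReal a = ENNReal.ofReal (max a 0) := by
    intro a; rcases le_total 0 a with h | h <;> simp [max_eq_left, max_eq_right, *,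
      ENNReal.ofReal_of_nonpos]
  have key : ∀ (g : α → ℝ), Integrable g μ →
      ∫⁻ x, ENNReal.ofReal (g x) ∂μ = ENNReal.ofReal (∫ x, max (g x) 0 ∂μ) := by
    intro g hg
    rw [lintegral_congr fun x ↦ hofReal (g x),
      ← ofReal_integral_eq_lintegral_ofReal hg.pos_part
        (Filter.Eventually.of_forall fun x ↦ le_max_right _ _)]
  rw [key f hf, key (fun x ↦ -f x) hf.neg]
  have h2 : ∫ x, max (f x) 0 ∂μ = (∫ x, f x ∂μ) + ∫ x, max (-f x) 0 ∂μ := by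
    have h3 := integral_add hf hf.neg.pos_part
    simp only [Pi.neg_apply] at h3
    rw [← h3]
    exact integral_congr_ae (Filter.Eventually.of_forall fun x ↦ hmax (f x))
  rw [h2]
  exact ENNReal.ofReal_add_le

end HJAux

/-- **Hoffman–Johnson decomposition.**  Let `px` be the data distribution, `κ` the variational
posterior (a Markov kernel `x ↦ q(z|x)`) and `pz` the prior.  The variational joint is
`q(x,z) = px ⊗ₘ κ`, the aggregated posterior `q(z)` is its second marginal, and the variational
mutual information is `I_q(x,z) = KL(q(x,z) ‖ px × q(z))`.  If `q(z|x) ≪ p(z)` for `px`-a.e. `x`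
and the expected KL is finite, then
`E_{x ∼ px}[KL(q(z|x) ‖ p(z))] = I_q(x,z) + KL(q(z) ‖ p(z))`. -/
theorem hoffman_johnson_decomposition
    {X Z : Type*} [MeasurableSpace X] [StandardBorelSpace X]
    [MeasurableSpace Z] [StandardBorelSpace Z]
    (px : Measure X) [IsProbabilityMeasure px]
    (pz : Measure Z) [IsProbabilityMeasure pz]
    (κ : ProbabilityTheory.Kernel X Z) [ProbabilityTheory.IsMarkovKernel κ]
    (habs : ∀ᵐ x ∂px, κ x ≪ pz)
    (hfin : ∫⁻ x, klDiv (κ x) pz ∂px ≠ ⊤) :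
    ∫⁻ x, klDiv (κ x) pz ∂px
      = klDiv (px ⊗ₘ κ) (px.prod ((px ⊗ₘ κ).snd)) + klDiv ((px ⊗ₘ κ).snd) pz := by
    classical
  set D : X × Z → ℝ≥0∞ := Function.uncurry (Kernel.rnDeriv κ (Kernel.const X pz)) with hDdef
  have hDm : Measurable D := Kernel.measurable_rnDeriv _ _
  set g : Z → ℝ≥0∞ := fun z ↦ ∫⁻ x, D (x, z) ∂px with hgdef
  have hgm : Measurable g := hDm.lintegral_prod_left'
  -- κ x is pz.withDensity of the kernel rnDeriv, for a.e. x
  have hκD : ∀ᵐ x ∂px, κ x = pz.withDensity (fun z ↦ D (x, z)) := by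
    filter_upwards [habs] with x hx
    have h1 : Kernel.withDensity (Kernel.const X pz)
        (Kernel.rnDeriv κ (Kernel.const X pz)) x = κ x :=
      Kernel.withDensity_rnDeriv_eq (by simpa using hx)
    rw [Kernel.withDensity_apply _ (Kernel.measurable_rnDeriv _ _)] at h1
    simp only [Kernel.const_apply] at h1
    exact h1.symm
  -- the joint is a density w.r.t. the product px × pz
  have hJ : px ⊗ₘ κ = (px.prod pz).withDensity D := by
    ext s hs
    rw [Measure.compProd_apply hs, withDensity_apply _ hs, ← lintegral_indicator hs _,
      lintegral_prod _ (hDm.indicator hs).aemeasurable]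
    refine lintegral_congr_ae ?_
    filter_upwards [hκD] with x hx
    rw [hx, withDensity_apply _ (measurable_prodMk_left hs),
      ← lintegral_indicator (measurable_prodMk_left hs) _]
    exact lintegral_congr fun z ↦ by simp [Set.indicator_apply, Set.mem_preimage]
  -- the aggregated posterior is a density w.r.t. pz
  have hqz : (px ⊗ₘ κ).snd = pz.withDensity g := by
    ext s hs
    rw [Measure.snd_apply hs, hJ, withDensity_apply _ (measurable_snd hs),
      ← lintegral_indicator (measurable_snd hs) _,
      lintegral_prod_symm _ (hDm.indicator (measurable_snd hs)).aemeasurable,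
      withDensity_apply _ hs, ← lintegral_indicator hs _]
    refine lintegral_congr fun z ↦ ?_
    by_cases hz : z ∈ s
    · simp only [Set.indicator_of_mem hz]
      refine lintegral_congr fun x ↦ ?_
      simp [Set.indicator_apply, Set.mem_preimage, hz]
    · simp only [Set.indicator_of_notMem hz, Set.indicator_apply, Set.mem_preimage, hz,
        if_false]
      simp
  have hqz_ac : (px ⊗ₘ κ).snd ≪ pz := hqz ▸ withDensity_absolutelyContinuous _ _
  have hqz_rn : ((px ⊗ₘ κ).snd).rnDeriv pz =ᵐ[pz] g := by
    rw [hqz]; exact Measure.rnDeriv_withDensity pz hgm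
  have hg_fin : ∀ᵐ z ∂pz, g z ≠ ∞ := by
    have h1 : pz.withDensity g Set.univ = 1 := by
      rw [← hqz]; exact measure_univ
    rw [withDensity_apply _ MeasurableSet.univ, setLIntegral_univ] at h1
    exact (ae_lt_top hgm (by simp [h1])).mono fun z h ↦ h.ne
  have hA : MeasurableSet {z | g z = 0} := hgm (measurableSet_singleton 0)
  have hD0 : ∀ᵐ p ∂(px.prod pz), g p.2 = 0 → D p = 0 := by
    have h1 : ∫⁻ p in Set.univ ×ˢ {z | g z = 0}, D p ∂(px.prod pz) = 0 := by
      rw [← Measure.prod_restrict Set.univ {z | g z = 0}, Measure.restrict_univ,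
        lintegral_prod_symm _ hDm.aemeasurable]
      calc ∫⁻ z, ∫⁻ x, D (x, z) ∂px ∂(pz.restrict {z | g z = 0})
          = ∫⁻ z in {z | g z = 0}, g z ∂pz := rfl
        _ = ∫⁻ z in {z | g z = 0}, 0 ∂pz := by
            refine setLIntegral_congr_fun_ae hA (Filter.Eventually.of_forall fun z hz ↦ hz)
        _ = 0 := by simp
    have h2 := (setLIntegral_eq_zero_iff (MeasurableSet.univ.prod hA) hDm).mp h1
    filter_upwards [h2] with p hp hgp
    exact hp ⟨Set.mem_univ _, hgp⟩
  have hgsnd : Measurable fun p : X × Z ↦ g p.2 := hgm.comp measurable_snd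
  have hprodqz : px.prod ((px ⊗ₘ κ).snd) = (px.prod pz).withDensity (fun p ↦ g p.2) := by
    rw [hqz]
    ext s hs
    rw [Measure.prod_apply hs, withDensity_apply _ hs, ← lintegral_indicator hs _,
      lintegral_prod _ (hgsnd.indicator hs).aemeasurable]
    refine lintegral_congr fun x ↦ ?_
    rw [withDensity_apply _ (measurable_prodMk_left hs),
      ← lintegral_indicator (measurable_prodMk_left hs) _]
    exact lintegral_congr fun z ↦ by simp [Set.indicator_apply, Set.mem_preimage]
  have hgfin_prod : ∀ᵐ p ∂(px.prod pz), g p.2 ≠ ∞ := by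
    rw [ae_iff]
    have hBm : MeasurableSet {z | g z = ∞} := hgm (measurableSet_singleton ⊤)
    have hset : {p : X × Z | ¬ g p.2 ≠ ∞} = Prod.snd ⁻¹' {z | g z = ∞} := by
      ext p; simp [not_not]
    rw [hset, Measure.prod_apply (measurable_snd hBm)]
    have : ∀ x : X, (Prod.mk x ⁻¹' (Prod.snd ⁻¹' {z | g z = ∞})) = {z | g z = ∞} := fun _ ↦ rfl
    simp only [this]
    have hB0 : pz {z | g z = ∞} = 0 := by
      have := ae_iff.mp hg_fin
      simpa [not_not] using this
    simp [hB0]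
  have hfm : Measurable fun p : X × Z ↦ D p * (g p.2)⁻¹ := hDm.mul hgsnd.inv
  have hJd2 : px ⊗ₘ κ = (px.prod ((px ⊗ₘ κ).snd)).withDensity (fun p ↦ D p * (g p.2)⁻¹) := by
    rw [hprodqz, ← withDensity_mul _ hgsnd hfm, hJ]
    refine withDensity_congr_ae ?_
    filter_upwards [hD0, hgfin_prod] with p h0 hfin2
    simp only [Pi.mul_apply]
    by_cases hg0 : g p.2 = 0
    · simp [hg0, h0 hg0]
    · rw [mul_comm (g p.2), mul_assoc, ENNReal.inv_mul_cancel hg0 hfin2, mul_one]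
  have hJac : px ⊗ₘ κ ≪ px.prod ((px ⊗ₘ κ).snd) := by
    have h := withDensity_absolutelyContinuous (px.prod ((px ⊗ₘ κ).snd))
      (fun p ↦ D p * (g p.2)⁻¹)
    rwa [← hJd2] at h
  have hJrn : (px ⊗ₘ κ).rnDeriv (px.prod ((px ⊗ₘ κ).snd))
      =ᵐ[px.prod ((px ⊗ₘ κ).snd)] fun p ↦ D p * (g p.2)⁻¹ := by
    have := Measure.rnDeriv_withDensity (px.prod ((px ⊗ₘ κ).snd)) hfm
    rwa [← hJd2] at this
  have hJacp : px ⊗ₘ κ ≪ px.prod pz := by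
    have h := withDensity_absolutelyContinuous (px.prod pz) D
    rwa [← hJ] at h
  have hD_pos_J : ∀ᵐ p ∂(px ⊗ₘ κ), D p ≠ 0 := by
    rw [ae_iff]
    have hset : {p : X × Z | ¬ D p ≠ 0} = {p : X × Z | D p = 0} := by ext p; simp
    have hSm0 : MeasurableSet {p : X × Z | D p = 0} := hDm (measurableSet_singleton 0)
    rw [hset, hJ, withDensity_apply _ hSm0]
    calc ∫⁻ p in {p : X × Z | D p = 0}, D p ∂(px.prod pz)
        = ∫⁻ p in {p : X × Z | D p = 0}, 0 ∂(px.prod pz) :=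
          setLIntegral_congr_fun_ae hSm0 (Filter.Eventually.of_forall fun p hp ↦ hp)
      _ = 0 := by simp
  have hD_fin_J : ∀ᵐ p ∂(px ⊗ₘ κ), D p ≠ ∞ := by
    refine hJacp.ae_le ?_
    show ∀ᵐ p ∂(px.prod pz), D p ≠ ∞
    rw [ae_iff]
    have hset : {p : X × Z | ¬ D p ≠ ∞} = {p | D p = ∞} := by ext p; simp
    have hSm : MeasurableSet {p : X × Z | D p = ∞} := hDm (measurableSet_singleton ⊤)
    rw [hset, Measure.prod_apply hSm]
    have hx0 : ∀ x : X, pz (Prod.mk x ⁻¹' {p : X × Z | D p = ∞}) = 0 := by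
      intro x
      have h1 : ∀ᵐ z ∂pz, Kernel.rnDeriv κ (Kernel.const X pz) x z ≠ ∞ := by
        have := Kernel.rnDeriv_ne_top κ (Kernel.const X pz) (a := x)
        simpa using this
      rw [← nonpos_iff_eq_zero]
      refine le_trans (measure_mono ?_) (le_of_eq (ae_iff.mp h1))
      intro z hz
      have hz' : Kernel.rnDeriv κ (Kernel.const X pz) x z = ∞ := hz
      simpa using hz'
    have h2 : ∀ x : X, pz {a | D (x, a) = ⊤} = 0 := hx0
    simp [h2]
  have hg_pos_J : ∀ᵐ p ∂(px ⊗ₘ κ), g p.2 ≠ 0 := by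
    rw [ae_iff]
    have hset : {p : X × Z | ¬ g p.2 ≠ 0} = {p : X × Z | g p.2 = 0} := by ext p; simp
    have hSm : MeasurableSet {p : X × Z | g p.2 = 0} := hgsnd (measurableSet_singleton 0)
    rw [hset, hJ, withDensity_apply _ hSm]
    calc ∫⁻ p in {p : X × Z | g p.2 = 0}, D p ∂(px.prod pz)
        = ∫⁻ p in {p : X × Z | g p.2 = 0}, 0 ∂(px.prod pz) :=
          setLIntegral_congr_fun_ae hSm (by filter_upwards [hD0] with p hp hmem; exact hp hmem)
      _ = 0 := by simp
  have hg_fin_J : ∀ᵐ p ∂(px ⊗ₘ κ), g p.2 ≠ ∞ := hJacp.ae_le hgfin_prod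
  have hllr_J : llr (px ⊗ₘ κ) (px.prod ((px ⊗ₘ κ).snd))
      =ᵐ[px ⊗ₘ κ] fun p ↦ Real.log (D p).toReal - Real.log (g p.2).toReal := by
    filter_upwards [hJac.ae_le hJrn, hD_pos_J, hD_fin_J, hg_pos_J, hg_fin_J] with p hrn hD0'
      hDfin hg0' hgfin'
    simp only [llr]
    rw [hrn, ENNReal.toReal_mul, ENNReal.toReal_inv,
      Real.log_mul (ENNReal.toReal_ne_zero.mpr ⟨hD0', hDfin⟩)
        (inv_ne_zero (ENNReal.toReal_ne_zero.mpr ⟨hg0', hgfin'⟩)),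
      Real.log_inv, ← sub_eq_add_neg]
  have hllr_qz : llr ((px ⊗ₘ κ).snd) pz =ᵐ[(px ⊗ₘ κ).snd] fun z ↦ Real.log (g z).toReal := by
    filter_upwards [hqz_ac.ae_le hqz_rn] with z hz
    simp only [llr, hz]
  have hllr_x : ∀ᵐ x ∂px, llr (κ x) pz =ᵐ[κ x] fun z ↦ Real.log (D (x, z)).toReal := by
    filter_upwards [habs] with x hx
    have h1 : Kernel.rnDeriv κ (Kernel.const X pz) x =ᵐ[pz] (κ x).rnDeriv pz := by
      have := Kernel.rnDeriv_eq_rnDeriv_measure (κ := κ) (η := Kernel.const X pz) (a := x)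
      simpa using this
    filter_upwards [hx.ae_le h1] with z hz
    simp only [llr]
    rw [← hz]
    rfl
  set L : X × Z → ℝ := fun p ↦ Real.log (D p).toReal with hLdef
  have hLm : Measurable L := hDm.ennreal_toReal.log
  set c : X → ℝ := fun x ↦ ∫ z, L (x, z) ∂(κ x) with hcdef
  have hcm : StronglyMeasurable c := hLm.stronglyMeasurable.integral_kernel_prod_right'
  set F : X → ℝ≥0∞ := fun x ↦ ∫⁻ z, ENNReal.ofReal ‖L (x, z)‖ ∂(κ x) with hFdef
  have hFm : Measurable F :=
    Measurable.lintegral_kernel_prod_right' (hLm.norm.ennreal_ofReal)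
  have hint_iff : ∀ x, Integrable (fun z ↦ L (x, z)) (κ x) ↔ F x < ∞ := by
    intro x
    constructor
    · intro h
      exact (hasFiniteIntegral_iff_norm _).mp h.hasFiniteIntegral
    · intro h
      refine ⟨(hLm.comp measurable_prodMk_left).aestronglyMeasurable, ?_⟩
      rw [hasFiniteIntegral_iff_norm]
      exact h
  have hcond : ∀ᵐ x ∂px, klDiv (κ x) pz = if F x < ∞ then ENNReal.ofReal (c x) else ⊤ := by
    filter_upwards [habs, hllr_x] with x hx hxl
    have hiff : Integrable (llr (κ x) pz) (κ x) ↔ F x < ∞ := by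
      rw [integrable_congr hxl]
      exact hint_iff x
    unfold klDiv
    by_cases hF : F x < ∞
    · rw [if_pos hF, if_pos ⟨hx, hiff.mpr hF⟩]
      congr 1
      exact integral_congr_ae hxl
    · rw [if_neg hF, if_neg]
      intro hcontra
      exact hF (hiff.mp hcontra.2)
  set G : X → ℝ≥0∞ := fun x ↦ if F x < ∞ then ENNReal.ofReal (c x) else ⊤ with hGdef
  have hGm : Measurable G :=
    Measurable.ite (measurableSet_lt hFm measurable_const)
      hcm.measurable.ennreal_ofReal measurable_const
  have hLHSG : ∫⁻ x, klDiv (κ x) pz ∂px = ∫⁻ x, G x ∂px := lintegral_congr_ae hcond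
  have hGfin : ∀ᵐ x ∂px, G x ≠ ⊤ := by
    refine (ae_lt_top hGm ?_).mono fun x h ↦ h.ne
    rw [← hLHSG]
    exact hfin
  have hFae : ∀ᵐ x ∂px, F x < ∞ := by
    filter_upwards [hGfin] with x h
    by_contra hcontra
    exact h (by simp [hGdef, hcontra])
  have hkl_eq : ∀ᵐ x ∂px, klDiv (κ x) pz = ENNReal.ofReal (c x) := by
    filter_upwards [hcond, hFae] with x h1 h2
    rw [h1, if_pos h2]
  have hint_x : ∀ᵐ x ∂px, Integrable (fun z ↦ L (x, z)) (κ x) := by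
    filter_upwards [hFae] with x hF
    exact (hint_iff x).mpr hF
  have hc_nonneg : ∀ᵐ x ∂px, 0 ≤ c x := by
    filter_upwards [habs, hllr_x, hint_x] with x hx hxl hxi
    have h1 : c x = ∫ z, llr (κ x) pz z ∂(κ x) := (integral_congr_ae hxl).symm
    rw [h1]
    exact aux_integral_llr_nonneg hx (hxi.congr hxl.symm)
  have hLneg_x : ∀ᵐ x ∂px, ∫⁻ z, ENNReal.ofReal (-L (x, z)) ∂(κ x) ≤ 1 := by
    filter_upwards [habs, hllr_x] with x hx hxl
    calc ∫⁻ z, ENNReal.ofReal (-L (x, z)) ∂(κ x)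
        = ∫⁻ z, ENNReal.ofReal (-llr (κ x) pz z) ∂(κ x) :=
          lintegral_congr_ae (hxl.mono fun z hz ↦ by
            show ENNReal.ofReal (-L (x, z)) = ENNReal.ofReal (-llr (κ x) pz z)
            have h2 : llr (κ x) pz z = L (x, z) := hz
            rw [h2])
      _ ≤ 1 := aux_lintegral_ofReal_neg_llr_le hx
  have hLpos_x : ∀ᵐ x ∂px,
      ∫⁻ z, ENNReal.ofReal (L (x, z)) ∂(κ x) ≤ ENNReal.ofReal (c x) + 1 := by
    filter_upwards [hint_x, hLneg_x] with x hxi hxn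
    calc ∫⁻ z, ENNReal.ofReal (L (x, z)) ∂(κ x)
        ≤ ENNReal.ofReal (∫ z, L (x, z) ∂(κ x)) + ∫⁻ z, ENNReal.ofReal (-L (x, z)) ∂(κ x) :=
          aux_lintegral_ofReal_le hxi
      _ ≤ ENNReal.ofReal (c x) + 1 := add_le_add le_rfl hxn
  have hlint_c : ∫⁻ x, ENNReal.ofReal (c x) ∂px ≠ ⊤ := by
    rw [← lintegral_congr_ae hkl_eq]
    exact hfin
  have hcompProd_pos : ∫⁻ p, ENNReal.ofReal (L p) ∂(px ⊗ₘ κ)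
      ≤ (∫⁻ x, ENNReal.ofReal (c x) ∂px) + 1 := by
    rw [Measure.lintegral_compProd hLm.ennreal_ofReal]
    calc ∫⁻ x, ∫⁻ z, ENNReal.ofReal (L (x, z)) ∂(κ x) ∂px
        ≤ ∫⁻ x, (ENNReal.ofReal (c x) + 1) ∂px := lintegral_mono_ae hLpos_x
      _ = (∫⁻ x, ENNReal.ofReal (c x) ∂px) + 1 := by
          rw [lintegral_add_right _ measurable_const]
          simp
  have hcompProd_neg : ∫⁻ p, ENNReal.ofReal (-L p) ∂(px ⊗ₘ κ) ≤ 1 := by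
    rw [Measure.lintegral_compProd (show Measurable fun p => ENNReal.ofReal (-L p) from hLm.neg.ennreal_ofReal)]
    calc ∫⁻ x, ∫⁻ z, ENNReal.ofReal (-L (x, z)) ∂(κ x) ∂px
        ≤ ∫⁻ x, 1 ∂px := lintegral_mono_ae hLneg_x
      _ = 1 := by simp
  have hofReal_abs : ∀ t : ℝ, ENNReal.ofReal ‖t‖
      ≤ ENNReal.ofReal t + ENNReal.ofReal (-t) := by
    intro t
    rw [Real.norm_eq_abs]
    rcases abs_cases t with ⟨he, _⟩ | ⟨he, _⟩
    · rw [he]; exact le_self_add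
    · rw [he]; exact le_add_self
  have hL_int : Integrable L (px ⊗ₘ κ) := by
    refine ⟨hLm.aestronglyMeasurable, ?_⟩
    rw [hasFiniteIntegral_iff_norm]
    calc ∫⁻ p, ENNReal.ofReal ‖L p‖ ∂(px ⊗ₘ κ)
        ≤ ∫⁻ p, (ENNReal.ofReal (L p) + ENNReal.ofReal (-L p)) ∂(px ⊗ₘ κ) :=
          lintegral_mono fun p ↦ hofReal_abs (L p)
      _ = (∫⁻ p, ENNReal.ofReal (L p) ∂(px ⊗ₘ κ))
            + ∫⁻ p, ENNReal.ofReal (-L p) ∂(px ⊗ₘ κ) :=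
          lintegral_add_left hLm.ennreal_ofReal _
      _ < ⊤ := by
          refine ENNReal.add_lt_top.mpr ⟨lt_of_le_of_lt hcompProd_pos ?_,
            lt_of_le_of_lt hcompProd_neg ENNReal.one_lt_top⟩
          exact ENNReal.add_lt_top.mpr ⟨lt_top_iff_ne_top.mpr hlint_c, ENNReal.one_lt_top⟩
  have hsndmap : (px ⊗ₘ κ).snd = (px ⊗ₘ κ).map Prod.snd := rfl
  have hMm : Measurable fun p : X × Z ↦ Real.log (g p.2).toReal :=
    (hgm.comp measurable_snd).ennreal_toReal.log
  have hMm1 : Measurable fun z : Z ↦ Real.log (g z).toReal := hgm.ennreal_toReal.log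
  have hMneg : ∫⁻ p, ENNReal.ofReal (-(Real.log (g p.2).toReal)) ∂(px ⊗ₘ κ) ≤ 1 := by
    have h1 : ∫⁻ p, ENNReal.ofReal (-(Real.log (g p.2).toReal)) ∂(px ⊗ₘ κ)
        = ∫⁻ z, ENNReal.ofReal (-(Real.log (g z).toReal)) ∂((px ⊗ₘ κ).snd) := by
      rw [hsndmap, lintegral_map (show
        Measurable fun z => ENNReal.ofReal (-(Real.log (g z).toReal)) from hMm1.neg.ennreal_ofReal) measurable_snd]
    rw [h1]
    calc ∫⁻ z, ENNReal.ofReal (-(Real.log (g z).toReal)) ∂((px ⊗ₘ κ).snd)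
        = ∫⁻ z, ENNReal.ofReal (-llr ((px ⊗ₘ κ).snd) pz z) ∂((px ⊗ₘ κ).snd) :=
          lintegral_congr_ae (hllr_qz.mono fun z hz ↦ by
            show ENNReal.ofReal (-(Real.log (g z).toReal)) = ENNReal.ofReal (-llr _ pz z)
            have h2 : llr ((px ⊗ₘ κ).snd) pz z = Real.log (g z).toReal := hz
            rw [h2])
      _ ≤ 1 := aux_lintegral_ofReal_neg_llr_le hqz_ac
  have hllrJneg : ∫⁻ p, ENNReal.ofReal (-llr (px ⊗ₘ κ) (px.prod ((px ⊗ₘ κ).snd)) p)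
      ∂(px ⊗ₘ κ) ≤ 1 := aux_lintegral_ofReal_neg_llr_le hJac
  have hMpos : ∫⁻ p, ENNReal.ofReal (Real.log (g p.2).toReal) ∂(px ⊗ₘ κ) < ⊤ := by
    have hb : ∀ᵐ p ∂(px ⊗ₘ κ), ENNReal.ofReal (Real.log (g p.2).toReal)
        ≤ ENNReal.ofReal (L p)
          + ENNReal.ofReal (-llr (px ⊗ₘ κ) (px.prod ((px ⊗ₘ κ).snd)) p) := by
      filter_upwards [hllr_J] with p hp
      have h2 : llr (px ⊗ₘ κ) (px.prod ((px ⊗ₘ κ).snd)) p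
          = L p - Real.log (g p.2).toReal := hp
      have h3 : Real.log (g p.2).toReal
          = L p + (-llr (px ⊗ₘ κ) (px.prod ((px ⊗ₘ κ).snd)) p) := by rw [h2]; ring
      rw [h3]
      exact ENNReal.ofReal_add_le
    calc ∫⁻ p, ENNReal.ofReal (Real.log (g p.2).toReal) ∂(px ⊗ₘ κ)
        ≤ ∫⁻ p, (ENNReal.ofReal (L p)
            + ENNReal.ofReal (-llr (px ⊗ₘ κ) (px.prod ((px ⊗ₘ κ).snd)) p)) ∂(px ⊗ₘ κ) :=
          lintegral_mono_ae hb
      _ ≤ (∫⁻ p, ENNReal.ofReal (L p) ∂(px ⊗ₘ κ))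
            + ∫⁻ p, ENNReal.ofReal (-llr (px ⊗ₘ κ) (px.prod ((px ⊗ₘ κ).snd)) p)
              ∂(px ⊗ₘ κ) := le_of_eq (lintegral_add_left hLm.ennreal_ofReal _)
      _ < ⊤ := by
          refine ENNReal.add_lt_top.mpr ⟨lt_of_le_of_lt hcompProd_pos ?_,
            lt_of_le_of_lt hllrJneg ENNReal.one_lt_top⟩
          exact ENNReal.add_lt_top.mpr ⟨lt_top_iff_ne_top.mpr hlint_c, ENNReal.one_lt_top⟩
  have hM_int : Integrable (fun p : X × Z ↦ Real.log (g p.2).toReal) (px ⊗ₘ κ) := by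
    refine ⟨hMm.aestronglyMeasurable, ?_⟩
    rw [hasFiniteIntegral_iff_norm]
    calc ∫⁻ p, ENNReal.ofReal ‖Real.log (g p.2).toReal‖ ∂(px ⊗ₘ κ)
        ≤ ∫⁻ p, (ENNReal.ofReal (Real.log (g p.2).toReal)
            + ENNReal.ofReal (-(Real.log (g p.2).toReal))) ∂(px ⊗ₘ κ) :=
          lintegral_mono fun p ↦ hofReal_abs _
      _ = (∫⁻ p, ENNReal.ofReal (Real.log (g p.2).toReal) ∂(px ⊗ₘ κ))
            + ∫⁻ p, ENNReal.ofReal (-(Real.log (g p.2).toReal)) ∂(px ⊗ₘ κ) :=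
          lintegral_add_left hMm.ennreal_ofReal _
      _ < ⊤ := ENNReal.add_lt_top.mpr ⟨hMpos, lt_of_le_of_lt hMneg ENNReal.one_lt_top⟩
  have hllrJ_int : Integrable (llr (px ⊗ₘ κ) (px.prod ((px ⊗ₘ κ).snd))) (px ⊗ₘ κ) :=
    (hL_int.sub hM_int).congr hllr_J.symm
  have hM_int_qz : Integrable (fun z ↦ Real.log (g z).toReal) ((px ⊗ₘ κ).snd) := by
    rw [hsndmap]
    exact (integrable_map_measure hMm1.aestronglyMeasurable
      measurable_snd.aemeasurable).mpr hM_int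
  have hllr_qz_int : Integrable (llr ((px ⊗ₘ κ).snd) pz) ((px ⊗ₘ κ).snd) :=
    hM_int_qz.congr hllr_qz.symm
  -- real-valued decomposition
  have hreal_split : ∫ p, L p ∂(px ⊗ₘ κ)
      = (∫ p, llr (px ⊗ₘ κ) (px.prod ((px ⊗ₘ κ).snd)) p ∂(px ⊗ₘ κ))
        + ∫ p, Real.log (g p.2).toReal ∂(px ⊗ₘ κ) := by
    rw [← integral_add hllrJ_int hM_int]
    refine integral_congr_ae ?_
    filter_upwards [hllr_J] with p hp
    show L p = llr (px ⊗ₘ κ) (px.prod ((px ⊗ₘ κ).snd)) p + Real.log (g p.2).toReal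
    have h2 : llr (px ⊗ₘ κ) (px.prod ((px ⊗ₘ κ).snd)) p
        = L p - Real.log (g p.2).toReal := hp
    rw [h2]; ring
  have hreal_c : ∫ p, L p ∂(px ⊗ₘ κ) = ∫ x, c x ∂px := by
    rw [Measure.integral_compProd hL_int]
  have hreal_M : ∫ p, Real.log (g p.2).toReal ∂(px ⊗ₘ κ)
      = ∫ z, llr ((px ⊗ₘ κ).snd) pz z ∂((px ⊗ₘ κ).snd) := by
    rw [integral_congr_ae hllr_qz, hsndmap,
      integral_map measurable_snd.aemeasurable hMm1.aestronglyMeasurable]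
  have hc_int : Integrable c px := by
    refine ⟨hcm.aestronglyMeasurable, ?_⟩
    rw [hasFiniteIntegral_iff_norm]
    have h1 : ∫⁻ x, ENNReal.ofReal ‖c x‖ ∂px = ∫⁻ x, ENNReal.ofReal (c x) ∂px := by
      refine lintegral_congr_ae ?_
      filter_upwards [hc_nonneg] with x hx
      rw [Real.norm_eq_abs, abs_of_nonneg hx]
    rw [h1]
    exact lt_top_iff_ne_top.mpr hlint_c
  have hLHS : ∫⁻ x, klDiv (κ x) pz ∂px = ENNReal.ofReal (∫ x, c x ∂px) := by
    rw [lintegral_congr_ae hkl_eq,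
      ← ofReal_integral_eq_lintegral_ofReal hc_int hc_nonneg]
  have hB_nonneg : 0 ≤ ∫ p, llr (px ⊗ₘ κ) (px.prod ((px ⊗ₘ κ).snd)) p ∂(px ⊗ₘ κ) :=
    aux_integral_llr_nonneg hJac hllrJ_int
  have hC_nonneg : 0 ≤ ∫ z, llr ((px ⊗ₘ κ).snd) pz z ∂((px ⊗ₘ κ).snd) :=
    aux_integral_llr_nonneg hqz_ac hllr_qz_int
  have hklB : klDiv (px ⊗ₘ κ) (px.prod ((px ⊗ₘ κ).snd))
      = ENNReal.ofReal (∫ p, llr (px ⊗ₘ κ) (px.prod ((px ⊗ₘ κ).snd)) p ∂(px ⊗ₘ κ)) := by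
    unfold klDiv
    rw [if_pos ⟨hJac, hllrJ_int⟩]
  have hklC : klDiv ((px ⊗ₘ κ).snd) pz
      = ENNReal.ofReal (∫ z, llr ((px ⊗ₘ κ).snd) pz z ∂((px ⊗ₘ κ).snd)) := by
    unfold klDiv
    rw [if_pos ⟨hqz_ac, hllr_qz_int⟩]
  rw [hLHS, hklB, hklC, ← ENNReal.ofReal_add hB_nonneg hC_nonneg]
  congr 1
  rw [← hreal_c, hreal_split, hreal_M]
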